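/- Let k \ge 1 and let x be a real number with H_k(x) \ne 0 satisfying H_k'(x) = x H_k(x) (i.e., t(x) = x). Then for every real q, the cubic inequality 2q x^3 - (2k + 2 + q^2) x^2 - 2q(2k-1) x + 2k(2k + q^2) \ge 0 holds. -/
import Mathlib


open Polynomial

/-- Physicists' Hermite polynomials: `H 0 = 1`, `H 1 = 2X`,
`H (n+2) = 2X * H (n+1) - 2(n+1) * H n`. -/
noncomputable def physHermite : ℕ → Polynomial ℝ
  | 0 => 1
  | 1 => C 2 * X
  | (n + 2) => C 2 * X * physHermite (n + 1) - C (2 * (n + 1) : ℝ) * physHermite n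

noncomputable def Hv (x : ℝ) (n : ℕ) : ℝ := (physHermite n).eval x

lemma Hv_zero (x : ℝ) : Hv x 0 = 1 := by simp [Hv, physHermite]

lemma Hv_one (x : ℝ) : Hv x 1 = 2 * x := by simp [Hv, physHermite]

lemma Hv_rec (x : ℝ) (n : ℕ) :
    Hv x (n + 2) = 2 * x * Hv x (n + 1) - 2 * ((n : ℝ) + 1) * Hv x n := by
  unfold Hv
  rw [physHermite]
  simp

lemma Hv_deriv (x : ℝ) (n : ℕ) :
    (derivative (physHermite (n + 1))).eval x = 2 * ((n : ℝ) + 1) * Hv x n := by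
  have key : ∀ m : ℕ,
      (derivative (physHermite (m + 1))).eval x = 2 * ((m : ℝ) + 1) * Hv x m ∧
      (derivative (physHermite (m + 2))).eval x = 2 * ((m : ℝ) + 2) * Hv x (m + 1) := by
    intro m
    induction m with
    | zero =>
        constructor
        · simp [physHermite, Hv]
        · rw [physHermite]
          simp [physHermite, Hv]
          ring
    | succ p ih =>
        have e : p + 1 + 1 = p + 2 := rfl
        have e2 : p + 1 + 2 = p + 3 := rfl
        constructor
        · rw [e, ih.2]
          push_cast
          ring
        · rw [e2, physHermite]
          rw [derivative_sub, derivative_mul, derivative_mul, derivative_C, derivative_X,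
            derivative_C_mul]
          have h1 := ih.1
          have h2 := ih.2
          have hr := Hv_rec x p
          simp only [eval_sub, eval_mul, eval_add, eval_C, eval_X, eval_zero, eval_one, zero_mul,
            zero_add, mul_one]
          rw [h1, h2]
          unfold Hv at *
          push_cast
          rw [hr]
          ring
  exact (key n).1

noncomputable def Sv (x : ℝ) : ℕ → ℝ
  | 0 => (Hv x 0) ^ 2
  | (n + 1) => ((n : ℝ) + 2) * (Hv x (n + 1)) ^ 2 - ((n : ℝ) + 1) * Hv x n * Hv x (n + 2)

noncomputable def Tv (x : ℝ) : ℕ → ℝ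
  | 0 => 0
  | 1 => 2 * Hv x 1 * Hv x 0
  | (n + 2) => ((n : ℝ) + 3) * Hv x (n + 2) * Hv x (n + 1) - ((n : ℝ) + 1) * Hv x (n + 3) * Hv x n

noncomputable def Ev (x q : ℝ) : ℕ → ℝ
  | 0 => 0
  | 1 => q ^ 2 * Sv x 0
  | (k + 2) => q ^ 2 * Sv x (k + 1) - 2 * ((k : ℝ) + 1) * q * Tv x (k + 1)
      + 4 * ((k : ℝ) + 2) * ((k : ℝ) + 1) * Sv x k

lemma Sv_succ (x : ℝ) (n : ℕ) :
    Sv x (n + 1) = (Hv x (n + 1)) ^ 2 + 2 * ((n : ℝ) + 1) * Sv x n := by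
  cases n with
  | zero =>
      simp only [Sv]
      rw [Hv_rec, Hv_zero, Hv_one]
      push_cast
      ring
  | succ m =>
      simp only [Sv]
      rw [Hv_rec x (m + 1), Hv_rec x m]
      push_cast
      ring

lemma Sv_nonneg (x : ℝ) (n : ℕ) : 0 ≤ Sv x n := by
  induction n with
  | zero => simp only [Sv]; positivity
  | succ m ih =>
      rw [Sv_succ]
      have h1 : (0:ℝ) ≤ (Hv x (m + 1)) ^ 2 := sq_nonneg _
      have h2 : (0:ℝ) ≤ 2 * ((m : ℝ) + 1) := by positivity
      nlinarith

lemma Tv_succ (x : ℝ) (n : ℕ) :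
    Tv x (n + 2) = 2 * Hv x (n + 2) * Hv x (n + 1) + 2 * ((n : ℝ) + 1) * Tv x (n + 1) := by
  cases n with
  | zero =>
      simp only [Tv]
      rw [Hv_rec x 1, Hv_rec x 0, Hv_zero, Hv_one]
      push_cast
      ring
  | succ m =>
      simp only [Tv]
      rw [Hv_rec x (m + 2), Hv_rec x (m + 1), Hv_rec x m]
      push_cast
      ring

lemma Ev_step (x q : ℝ) (m : ℕ) :
    Ev x q (m + 3) = 2 * ((m : ℝ) + 2) * Ev x q (m + 2)
      + (q * Hv x (m + 2) - 2 * ((m : ℝ) + 2) * Hv x (m + 1)) ^ 2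
      + 4 * ((m : ℝ) + 2) * (Hv x (m + 1)) ^ 2
      + 8 * ((m : ℝ) + 2) * ((m : ℝ) + 1) * Sv x m := by
  cases m with
  | zero =>
      simp only [Ev]
      rw [Sv_succ x 1, Sv_succ x 0, Tv_succ x 0]
      simp only [Tv, Sv]
      rw [Hv_zero, Hv_one]
      push_cast
      ring
  | succ p =>
      simp only [Ev]
      rw [Sv_succ x (p + 2), Sv_succ x (p + 1), Tv_succ x (p + 1)]
      push_cast
      ring

lemma Ev_nonneg (x q : ℝ) (k : ℕ) : 0 ≤ Ev x q k := by
  induction k using Nat.strong_induction_on with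
  | _ k ih =>
    match k with
    | 0 => simp [Ev]
    | 1 =>
        simp only [Ev, Sv]
        positivity
    | 2 =>
        simp only [Ev, Sv, Tv]
        rw [Hv_zero, Hv_one, Hv_rec, Hv_zero, Hv_one]
        push_cast
        nlinarith [sq_nonneg (2 * q * x - 2), sq_nonneg q]
    | (m + 3) =>
        rw [Ev_step]
        have h1 : 0 ≤ Ev x q (m + 2) := ih (m + 2) (by omega)
        have h2 : 0 ≤ Sv x m := Sv_nonneg x m
        have h3 : (0:ℝ) ≤ (q * Hv x (m + 2) - 2 * ((m : ℝ) + 2) * Hv x (m + 1)) ^ 2 := sq_nonneg _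
        have h4 : (0:ℝ) ≤ (Hv x (m + 1)) ^ 2 := sq_nonneg _
        have hm : (0:ℝ) ≤ (m : ℝ) := Nat.cast_nonneg m
        have e1 : (0:ℝ) ≤ 2 * ((m : ℝ) + 2) * Ev x q (m + 2) := by positivity
        have e2 : (0:ℝ) ≤ 4 * ((m : ℝ) + 2) * (Hv x (m + 1)) ^ 2 := by positivity
        have e3 : (0:ℝ) ≤ 8 * ((m : ℝ) + 2) * ((m : ℝ) + 1) * Sv x m := by positivity
        linarith

set_option maxHeartbeats 1000000 in
theorem hermite_cubic_inequality (k : ℕ) (hk : 1 ≤ k) (x : ℝ)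
    (hx : (physHermite k).eval x ≠ 0)
    (ht : (derivative (physHermite k)).eval x = x * (physHermite k).eval x)
    (q : ℝ) :
    0 ≤ 2 * q * x ^ 3 - (2 * k + 2 + q ^ 2) * x ^ 2 - 2 * q * (2 * k - 1) * x
        + 2 * k * (2 * k + q ^ 2) := by
  match k, hk with
  | 1, _ =>
      simp only [physHermite] at ht
      simp at ht
      have hx2 : x ^ 2 = 1 := by nlinarith
      have e : 2 * q * x ^ 3 - (2 * (1:ℕ) + 2 + q ^ 2) * x ^ 2 - 2 * q * (2 * (1:ℕ) - 1) * x
          + 2 * (1:ℕ) * (2 * (1:ℕ) + q ^ 2) = q ^ 2 := by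
        push_cast
        linear_combination (2 * q * x - 4 - q ^ 2) * hx2
      rw [e]
      positivity
  | 2, _ =>
      have hd := Hv_deriv x 1
      norm_num [Hv_one] at hd
      rw [hd] at ht
      have hev : (physHermite 2).eval x = 4 * x ^ 2 - 2 := by
        have := Hv_rec x 0
        rw [Hv_zero, Hv_one] at this
        unfold Hv at this
        rw [this]
        ring
      rw [hev] at ht
      have h3 : 4 * x ^ 3 = 10 * x := by linear_combination -ht
      have h4 : 4 * x ^ 4 = 10 * x ^ 2 := by linear_combination x * h3
      have h25 : x ^ 2 ≤ 5 / 2 := by nlinarith [h4, sq_nonneg x]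
      have h5 : 2 * q * x ^ 3 = 5 * q * x := by linear_combination (q / 2) * h3
      push_cast
      nlinarith [sq_nonneg (q * x - 1), mul_nonneg (sq_nonneg q) (by linarith : (0:ℝ) ≤ 5 / 2 - x ^ 2), h5, sq_nonneg q]
  | (m + 3), _ =>
      set K : ℝ := (m : ℝ) + 3 with hK
      set a := Hv x (m + 3) with ha
      set b := Hv x (m + 2) with hb'
      set c := Hv x (m + 1) with hc'
      set d := Hv x m with hd'
      have hm0 : (0:ℝ) ≤ (m : ℝ) := Nat.cast_nonneg m
      have hKpos : (0:ℝ) < K := by rw [hK]; linarith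
      have hK1 : (0:ℝ) < K - 1 := by rw [hK]; linarith
      have hK2 : (0:ℝ) < K - 2 := by rw [hK]; linarith
      -- derivative identity
      have hdv : (derivative (physHermite (m + 3))).eval x = 2 * K * b := by
        have := Hv_deriv x (m + 2)
        rw [show m + 2 + 1 = m + 3 from rfl] at this
        rw [this, ← hb']
        push_cast [hK]
        ring
      have hB : 2 * K * b = x * a := by
        rw [← hdv]
        exact ht
      have hrec1 : a = 2 * x * b - 2 * (K - 1) * c := by
        have := Hv_rec x (m + 1)
        rw [show m + 1 + 2 = m + 3 from rfl, show m + 1 + 1 = m + 2 from rfl] at this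
        rw [ha, hb', hc', this]
        push_cast [hK]
        ring
      have hrec2 : b = 2 * x * c - 2 * (K - 2) * d := by
        have := Hv_rec x m
        rw [show m + 2 = m + 2 from rfl] at this
        rw [hb', hc', hd', this]
        push_cast [hK]
        ring
      have hC : 2 * K * (K - 1) * c = a * (x ^ 2 - K) := by
        linear_combination K * hrec1 + x * hB
      have hD : 4 * K * (K - 1) * (K - 2) * d = x * a * (2 * x ^ 2 - 3 * K + 1) := by
        linear_combination 2 * K * (K - 1) * hrec2 + 2 * x * hC - (K - 1) * hB
      have hbb : b = x * a / (2 * K) := by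
        field_simp
        linear_combination hB
      have hcc : c = a * (x ^ 2 - K) / (2 * K * (K - 1)) := by
        field_simp
        linear_combination hC
      have hdd : d = x * a * (2 * x ^ 2 - 3 * K + 1) / (4 * K * (K - 1) * (K - 2)) := by
        field_simp
        linear_combination hD
      have key : a ^ 2 * (2 * q * x ^ 3 - (2 * K + 2 + q ^ 2) * x ^ 2
          - 2 * q * (2 * K - 1) * x + 2 * K * (2 * K + q ^ 2)) = 4 * K * Ev x q (m + 3) := by
        have eE : Ev x q (m + 3) = q ^ 2 * Sv x (m + 2) - 2 * (K - 1) * q * Tv x (m + 2)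
            + 4 * K * (K - 1) * Sv x (m + 1) := by
          simp only [Ev]
          rw [show m + 1 + 1 = m + 2 from rfl]
          push_cast [hK]
          ring
        have eS1 : Sv x (m + 2) = K * b ^ 2 - (K - 1) * c * a := by
          simp only [Sv]
          rw [show m + 1 + 1 = m + 2 from rfl, show m + 1 + 2 = m + 3 from rfl,
            ← ha, ← hb', ← hc']
          push_cast [hK]
          ring
        have eT1 : Tv x (m + 2) = K * b * c - (K - 2) * a * d := by
          simp only [Tv]
          rw [show m + 3 = m + 3 from rfl, ← ha, ← hb', ← hc', ← hd']
          push_cast [hK]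
          ring
        have eS2 : Sv x (m + 1) = (K - 1) * c ^ 2 - (K - 2) * d * b := by
          simp only [Sv]
          rw [show m + 2 = m + 2 from rfl, ← hb', ← hc', ← hd']
          push_cast [hK]
          ring
        rw [eE, eS1, eT1, eS2, hdd, hcc, hbb]
        field_simp
        ring
      have hE : 0 ≤ Ev x q (m + 3) := Ev_nonneg x q (m + 3)
      have ha2 : 0 < a ^ 2 := by
        have : a ≠ 0 := hx
        positivity
      have hprod : 0 ≤ a ^ 2 * (2 * q * x ^ 3 - (2 * K + 2 + q ^ 2) * x ^ 2
          - 2 * q * (2 * K - 1) * x + 2 * K * (2 * K + q ^ 2)) := by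
        rw [key]
        positivity
      have hgoal : 0 ≤ 2 * q * x ^ 3 - (2 * K + 2 + q ^ 2) * x ^ 2
          - 2 * q * (2 * K - 1) * x + 2 * K * (2 * K + q ^ 2) := by
        by_contra hcon
        push_neg at hcon
        nlinarith [hprod, ha2, hcon]
      rw [hK] at hgoal
      push_cast
      linarith [hgoal]
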